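/- Let T = {0,1}, m, n ≥ 1 and L = {H^{p(t)}_t, V^{q(t)}_t : t ∈ T} with p(t), q(t) ≥ 2 for all t. The local-surgery algorithm (repeatedly: find a violating cell of minimal weight, flip its tile if that resolves it without new violation at that cell, otherwise perform the 3-cell surgery setting f(i,j) = f(i-1,j-1) and f(i-1,j) = f(i,j-1) = 1 - f(i-1,j-1)) terminates in finitely many steps and outputs an L-dappled tiling. Moreover, if the input tiling is already L-dappled, the output equals the input. -/
import Mathlib


def vioH (f : ℕ → ℕ → Fin 2) (p : ℕ) (t : Fin 2) (i j : ℕ) : Prop :=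
  p ≤ i ∧ ∀ s ≤ p, f (i - s) j = t

def vioV (f : ℕ → ℕ → Fin 2) (q : ℕ) (t : Fin 2) (i j : ℕ) : Prop :=
  q ≤ j ∧ ∀ s ≤ q, f i (j - s) = t

def vioAny (p q : Fin 2 → ℕ) (f : ℕ → ℕ → Fin 2) (i j : ℕ) : Prop :=
  ∃ t : Fin 2, vioH f (p t) t i j ∨ vioV f (q t) t i j

def Dappled (m n : ℕ) (p q : Fin 2 → ℕ) (f : ℕ → ℕ → Fin 2) : Prop :=
  ∀ i < m, ∀ j < n, ¬ vioAny p q f i j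

def upd (f : ℕ → ℕ → Fin 2) (a b : ℕ) (v : Fin 2) : ℕ → ℕ → Fin 2 :=
  fun i j => if i = a ∧ j = b then v else f i j

/-- The 3-cell surgery at `(i,j)`:
`f(i,j) ← f(i-1,j-1)`, `f(i-1,j) ← 1 - f(i-1,j-1)`, `f(i,j-1) ← 1 - f(i-1,j-1)`. -/
def surgery3 (f : ℕ → ℕ → Fin 2) (i j : ℕ) : ℕ → ℕ → Fin 2 :=
  upd (upd (upd f i j (f (i-1) (j-1))) (i-1) j (1 - f (i-1) (j-1))) i (j-1)
    (1 - f (i-1) (j-1))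

/-- One step of the local-surgery algorithm: at a violating cell of minimal
weight, flip the tile if that resolves the violation at that cell, otherwise
perform the 3-cell surgery. -/
def step (m n : ℕ) (p q : Fin 2 → ℕ) (f g : ℕ → ℕ → Fin 2) : Prop :=
  ∃ i j, i < m ∧ j < n ∧ vioAny p q f i j ∧
    (∀ i' j', i' < m → j' < n → i' + j' < i + j → ¬ vioAny p q f i' j') ∧
    ((¬ vioAny p q (upd f i j (1 - f i j)) i j ∧ g = upd f i j (1 - f i j)) ∨
     (vioAny p q (upd f i j (1 - f i j)) i j ∧ g = surgery3 f i j))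

-- helpers
lemma f2ss : ∀ x : Fin 2, 1 - (1 - x) = x := by decide
lemma f2ne : ∀ x : Fin 2, 1 - x ≠ x := by decide

lemma upd_ne {f : ℕ → ℕ → Fin 2} {a b x y : ℕ} {v : Fin 2} (h : ¬(x = a ∧ y = b)) :
    upd f a b v x y = f x y := if_neg h

lemma upd_self (f : ℕ → ℕ → Fin 2) (a b : ℕ) (v : Fin 2) : upd f a b v a b = v :=
  if_pos ⟨rfl, rfl⟩

lemma sg_ij (f : ℕ → ℕ → Fin 2) (i j : ℕ) (hi : 1 ≤ i) (hj : 1 ≤ j) :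
    surgery3 f i j i j = f (i-1) (j-1) := by
  unfold surgery3
  rw [upd_ne (by omega), upd_ne (by omega), upd_self]

lemma sg_i1j (f : ℕ → ℕ → Fin 2) (i j : ℕ) (hi : 1 ≤ i) :
    surgery3 f i j (i-1) j = 1 - f (i-1) (j-1) := by
  unfold surgery3
  rw [upd_ne (by omega), upd_self]

lemma sg_ij1 (f : ℕ → ℕ → Fin 2) (i j : ℕ) :
    surgery3 f i j i (j-1) = 1 - f (i-1) (j-1) := by
  unfold surgery3
  rw [upd_self]

lemma sg_other (f : ℕ → ℕ → Fin 2) (i j x y : ℕ) (h1 : ¬(x = i ∧ y = j))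
    (h2 : ¬(x = i - 1 ∧ y = j)) (h3 : ¬(x = i ∧ y = j - 1)) :
    surgery3 f i j x y = f x y := by
  unfold surgery3
  rw [upd_ne h3, upd_ne h2, upd_ne h1]

lemma vioH_congr {f g : ℕ → ℕ → Fin 2} {p : ℕ} {t : Fin 2} {i j : ℕ}
    (h : ∀ s ≤ p, f (i - s) j = g (i - s) j) : vioH f p t i j ↔ vioH g p t i j := by
  constructor <;> rintro ⟨h1, h2⟩ <;> refine ⟨h1, fun s hs => ?_⟩
  · rw [← h s hs]; exact h2 s hs
  · rw [h s hs]; exact h2 s hs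

lemma vioV_congr {f g : ℕ → ℕ → Fin 2} {q : ℕ} {t : Fin 2} {i j : ℕ}
    (h : ∀ s ≤ q, f i (j - s) = g i (j - s)) : vioV f q t i j ↔ vioV g q t i j := by
  constructor <;> rintro ⟨h1, h2⟩ <;> refine ⟨h1, fun s hs => ?_⟩
  · rw [← h s hs]; exact h2 s hs
  · rw [h s hs]; exact h2 s hs

lemma vioAny_congr {f g : ℕ → ℕ → Fin 2} {p q : Fin 2 → ℕ} {i j : ℕ}
    (h1 : ∀ (t : Fin 2), ∀ s ≤ p t, f (i - s) j = g (i - s) j)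
    (h2 : ∀ (t : Fin 2), ∀ s ≤ q t, f i (j - s) = g i (j - s)) :
    vioAny p q f i j ↔ vioAny p q g i j := by
  unfold vioAny
  constructor <;> rintro ⟨t, h | h⟩
  · exact ⟨t, Or.inl ((vioH_congr (h1 t)).mp h)⟩
  · exact ⟨t, Or.inr ((vioV_congr (h2 t)).mp h)⟩
  · exact ⟨t, Or.inl ((vioH_congr (h1 t)).mpr h)⟩
  · exact ⟨t, Or.inr ((vioV_congr (h2 t)).mpr h)⟩

noncomputable def Vset (m n : ℕ) (p q : Fin 2 → ℕ) (f : ℕ → ℕ → Fin 2) : Finset (ℕ × ℕ) :=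
  @Finset.filter _ (fun x => vioAny p q f x.1 x.2) (Classical.decPred _)
    (Finset.range m ×ˢ Finset.range n)

def wSet (m n : ℕ) (p q : Fin 2 → ℕ) (f : ℕ → ℕ → Fin 2) : Set ℕ :=
  {w | ∃ x : ℕ × ℕ, x.1 < m ∧ x.2 < n ∧ x.1 + x.2 = w ∧ vioAny p q f x.1 x.2}

noncomputable def mu (m n : ℕ) (p q : Fin 2 → ℕ) (f : ℕ → ℕ → Fin 2) : ℕ :=
  @ite _ (Dappled m n p q f) (Classical.propDecidable _) 0
    ((m + n - sInf (wSet m n p q f)) * (m * n) +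
      ((Vset m n p q f).filter (fun x => x.1 + x.2 = sInf (wSet m n p q f))).card)

lemma mem_Vset {m n : ℕ} {p q : Fin 2 → ℕ} {f : ℕ → ℕ → Fin 2} {x : ℕ × ℕ} :
    x ∈ Vset m n p q f ↔ x.1 < m ∧ x.2 < n ∧ vioAny p q f x.1 x.2 := by
  classical
  unfold Vset
  rw [Finset.mem_filter, Finset.mem_product, Finset.mem_range, Finset.mem_range]
  tauto

lemma wSet_nonempty {m n : ℕ} {p q : Fin 2 → ℕ} {f : ℕ → ℕ → Fin 2}
    (hnd : ¬ Dappled m n p q f) : (wSet m n p q f).Nonempty := by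
  unfold Dappled at hnd
  push_neg at hnd
  obtain ⟨i, hi, j, hj, hv⟩ := hnd
  exact ⟨i + j, ⟨(i, j), hi, hj, rfl, hv⟩⟩

lemma mu_lt (m n : ℕ) (p q : Fin 2 → ℕ) (f g : ℕ → ℕ → Fin 2) (i j : ℕ)
    (hi : i < m) (hj : j < n) (hvio : vioAny p q f i j)
    (hmin : ∀ a b, a < m → b < n → a + b < i + j → ¬ vioAny p q f a b)
    (H2 : ∀ a b, a < m → b < n → a + b ≤ i + j → vioAny p q g a b →
      vioAny p q f a b ∧ (a, b) ≠ (i, j)) :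
    mu m n p q g < mu m n p q f := by
  have hndf : ¬ Dappled m n p q f := fun h => h i hi j hj hvio
  have hSfne : (wSet m n p q f).Nonempty := ⟨i + j, ⟨(i, j), hi, hj, rfl, hvio⟩⟩
  have hwf : sInf (wSet m n p q f) = i + j := by
    refine le_antisymm (Nat.sInf_le ⟨(i, j), hi, hj, rfl, hvio⟩) ?_
    obtain ⟨⟨a, b⟩, ha, hb, hab, hv⟩ := Nat.sInf_mem hSfne
    by_contra hc
    push_neg at hc
    exact hmin a b ha hb (by omega) hv
  have hmemf : (i, j) ∈ (Vset m n p q f).filter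
      (fun x => x.1 + x.2 = sInf (wSet m n p q f)) := by
    rw [Finset.mem_filter, mem_Vset]
    exact ⟨⟨hi, hj, hvio⟩, by simp [hwf]⟩
  have hcntf : 0 < ((Vset m n p q f).filter
      (fun x => x.1 + x.2 = sInf (wSet m n p q f))).card :=
    Finset.card_pos.mpr ⟨(i, j), hmemf⟩
  unfold mu
  rw [if_neg hndf]
  by_cases hndg : Dappled m n p q g
  · rw [if_pos hndg]
    exact Nat.lt_of_lt_of_le hcntf (Nat.le_add_left _ _)
  · rw [if_neg hndg]
    have hSg := wSet_nonempty hndg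
    obtain ⟨⟨a, b⟩, ha, hb, hab, hv⟩ := Nat.sInf_mem hSg
    have hge : i + j ≤ sInf (wSet m n p q g) := by
      by_contra hc
      push_neg at hc
      exact hmin a b ha hb (by omega) (H2 a b ha hb (by omega) hv).1
    rcases eq_or_lt_of_le hge with heq | hlt
    · have hsub : (Vset m n p q g).filter (fun x => x.1 + x.2 = sInf (wSet m n p q g)) ⊆
          ((Vset m n p q f).filter (fun x => x.1 + x.2 = sInf (wSet m n p q f))).erase (i, j) := by
        intro x hx
        rw [Finset.mem_filter, mem_Vset] at hx
        obtain ⟨⟨h1, h2, h3⟩, h4⟩ := hx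
        have h5 := H2 x.1 x.2 h1 h2 (by omega) h3
        rw [Finset.mem_erase, Finset.mem_filter, mem_Vset]
        refine ⟨by simpa using h5.2, ⟨h1, h2, h5.1⟩, by omega⟩
      have hcnt : ((Vset m n p q g).filter
            (fun x => x.1 + x.2 = sInf (wSet m n p q g))).card <
          ((Vset m n p q f).filter
            (fun x => x.1 + x.2 = sInf (wSet m n p q f))).card := by
        have h6 := Finset.card_le_card hsub
        rw [Finset.card_erase_of_mem hmemf] at h6
        omega
      have e1 : m + n - sInf (wSet m n p q g) = m + n - sInf (wSet m n p q f) := by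
        rw [hwf, ← heq]
      rw [e1]
      exact Nat.add_lt_add_left hcnt _
    · have hwgle : sInf (wSet m n p q g) ≤ m + n := by omega
      have hcg : ((Vset m n p q g).filter
          (fun x => x.1 + x.2 = sInf (wSet m n p q g))).card ≤ m * n := by
        classical
        refine le_trans (Finset.card_filter_le _ _) ?_
        unfold Vset
        refine le_trans (Finset.card_filter_le _ _) ?_
        rw [Finset.card_product, Finset.card_range, Finset.card_range]
      calc ((m + n - sInf (wSet m n p q g)) * (m * n) +
            ((Vset m n p q g).filter (fun x => x.1 + x.2 = sInf (wSet m n p q g))).card)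
          ≤ (m + n - sInf (wSet m n p q g)) * (m * n) + m * n := by omega
        _ = (m + n - sInf (wSet m n p q g) + 1) * (m * n) := by ring
        _ ≤ (m + n - sInf (wSet m n p q f)) * (m * n) := by
            have h7 : m + n - sInf (wSet m n p q g) + 1 ≤ m + n - sInf (wSet m n p q f) := by
              rw [hwf]; omega
            exact Nat.mul_le_mul_right _ h7
        _ < _ := Nat.lt_add_of_pos_right hcntf

lemma flip_H2 (p q : Fin 2 → ℕ) (f : ℕ → ℕ → Fin 2) (i j : ℕ)
    (hok : ¬ vioAny p q (upd f i j (1 - f i j)) i j) :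
    ∀ a b, a + b ≤ i + j → vioAny p q (upd f i j (1 - f i j)) a b →
      vioAny p q f a b ∧ (a, b) ≠ (i, j) := by
  intro a b hw hg
  by_cases c1 : a = i ∧ b = j
  · obtain ⟨rfl, rfl⟩ := c1
    exact absurd hg hok
  · have hrow : ∀ s : ℕ, upd f i j (1 - f i j) (a - s) b = f (a - s) b :=
      fun s => upd_ne (by omega)
    have hcol : ∀ s : ℕ, upd f i j (1 - f i j) a (b - s) = f a (b - s) :=
      fun s => upd_ne (by omega)
    refine ⟨(vioAny_congr (fun t s _ => hrow s) (fun t s _ => hcol s)).mp hg, ?_⟩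
    simp only [ne_eq, Prod.mk.injEq]
    omega

lemma surgery_H2 (m n : ℕ) (p q : Fin 2 → ℕ) (hp : ∀ t, 2 ≤ p t) (hq : ∀ t, 2 ≤ q t)
    (f : ℕ → ℕ → Fin 2) (i j : ℕ) (hi : i < m) (hj : j < n)
    (hvio : vioAny p q f i j)
    (hmin : ∀ a b, a < m → b < n → a + b < i + j → ¬ vioAny p q f a b)
    (hff : vioAny p q (upd f i j (1 - f i j)) i j) :
    ∀ a b, a < m → b < n → a + b ≤ i + j → vioAny p q (surgery3 f i j) a b →
      vioAny p q f a b ∧ (a, b) ≠ (i, j) := by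
  have hmain : ∃ e : Fin 2, 2 ≤ i ∧ 2 ≤ j ∧ f (i-1) j = e ∧ f (i-2) j = e ∧
      f i (j-1) = 1 - e ∧ f i (j-2) = 1 - e := by
    obtain ⟨t', hH' | hV'⟩ := hff
    · -- flipped violation is horizontal
      have ht0 := hH'.2 0 (Nat.zero_le _)
      simp only [Nat.sub_zero] at ht0
      rw [upd_self] at ht0   -- ht0 : 1 - f i j = t'
      have hpi : p t' ≤ i := hH'.1
      have i2 : 2 ≤ i := le_trans (hp t') hpi
      have hA : ∀ s, 1 ≤ s → s ≤ p t' → f (i - s) j = t' := by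
        intro s h1 h2
        have h3 := hH'.2 s h2
        rwa [upd_ne (by omega)] at h3
      obtain ⟨t, hOH | hOV⟩ := hvio
      · exfalso
        have e0 := hOH.2 0 (Nat.zero_le _)
        simp only [Nat.sub_zero] at e0  -- f i j = t
        have e1 := hOH.2 1 (le_trans (by omega) (hp t))  -- f (i-1) j = t
        have e2 := hA 1 le_rfl (le_trans (by omega) (hp t'))  -- f (i-1) j = t'
        refine f2ne (f i j) ?_
        rw [ht0, ← e2, e1, ← e0]
      · have e0 := hOV.2 0 (Nat.zero_le _)
        simp only [Nat.sub_zero] at e0  -- f i j = t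
        have j2 : 2 ≤ j := le_trans (hq t) hOV.1
        refine ⟨1 - f i j, i2, j2, ?_, ?_, ?_, ?_⟩
        · rw [hA 1 le_rfl (le_trans (by omega) (hp t'))]
          exact ht0.symm
        · rw [hA 2 (by omega) (hp t')]
          exact ht0.symm
        · rw [f2ss, hOV.2 1 (le_trans (by omega) (hq t))]
          exact e0.symm
        · rw [f2ss, hOV.2 2 (hq t)]
          exact e0.symm
    · -- flipped violation is vertical
      have ht0 := hV'.2 0 (Nat.zero_le _)
      simp only [Nat.sub_zero] at ht0
      rw [upd_self] at ht0   -- ht0 : 1 - f i j = t'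
      have hqj : q t' ≤ j := hV'.1
      have j2 : 2 ≤ j := le_trans (hq t') hqj
      have hA : ∀ s, 1 ≤ s → s ≤ q t' → f i (j - s) = t' := by
        intro s h1 h2
        have h3 := hV'.2 s h2
        rwa [upd_ne (by omega)] at h3
      obtain ⟨t, hOH | hOV⟩ := hvio
      · have e0 := hOH.2 0 (Nat.zero_le _)
        simp only [Nat.sub_zero] at e0  -- f i j = t
        have i2 : 2 ≤ i := le_trans (hp t) hOH.1
        refine ⟨f i j, i2, j2, ?_, ?_, ?_, ?_⟩
        · rw [hOH.2 1 (le_trans (by omega) (hp t))]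
          exact e0.symm
        · rw [hOH.2 2 (hp t)]
          exact e0.symm
        · rw [hA 1 le_rfl (le_trans (by omega) (hq t'))]
          exact ht0.symm
        · rw [hA 2 (by omega) (hq t')]
          exact ht0.symm
      · exfalso
        have e0 := hOV.2 0 (Nat.zero_le _)
        simp only [Nat.sub_zero] at e0  -- f i j = t
        have e1 := hOV.2 1 (le_trans (by omega) (hq t))  -- f i (j-1) = t
        have e2 := hA 1 le_rfl (le_trans (by omega) (hq t'))  -- f i (j-1) = t'
        refine f2ne (f i j) ?_
        rw [ht0, ← e2, e1, ← e0]
  obtain ⟨e, i2, j2, he1, he2, he3, he4⟩ := hmain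
  have hi1 : (1:ℕ) ≤ i := by omega
  have hj1 : (1:ℕ) ≤ j := by omega
  intro a b ha hb hw hg
  by_cases c1 : a = i ∧ b = j
  · exfalso
    rw [c1.1, c1.2] at hg
    obtain ⟨t, hH | hV⟩ := hg
    · have x0 := hH.2 0 (Nat.zero_le _)
      simp only [Nat.sub_zero] at x0
      rw [sg_ij f i j hi1 hj1] at x0  -- f(i-1)(j-1) = t
      have x1 := hH.2 1 (le_trans (by omega) (hp t))
      rw [sg_i1j f i j hi1] at x1  -- 1 - f(i-1)(j-1) = t
      exact f2ne _ (x1.trans x0.symm)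
    · have x0 := hV.2 0 (Nat.zero_le _)
      simp only [Nat.sub_zero] at x0
      rw [sg_ij f i j hi1 hj1] at x0
      have x1 := hV.2 1 (le_trans (by omega) (hq t))
      rw [sg_ij1 f i j] at x1
      exact f2ne _ (x1.trans x0.symm)
  by_cases c2 : a = i - 1 ∧ b = j
  · exfalso
    rw [c2.1, c2.2] at hg
    obtain ⟨t, hH | hV⟩ := hg
    · have x0 := hH.2 0 (Nat.zero_le _)
      simp only [Nat.sub_zero] at x0
      rw [sg_i1j f i j hi1] at x0  -- 1 - f(i-1)(j-1) = t
      have x1 := hH.2 1 (le_trans (by omega) (hp t))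
      have hx1 : i - 1 - 1 = i - 2 := by omega
      rw [hx1, sg_other f i j _ _ (by omega) (by omega) (by omega), he2] at x1  -- e = t
      have hgf : ∀ s ≤ p t, surgery3 f i j (i - 1 - s) j = f (i - 1 - s) j := by
        intro s hs
        rcases Nat.eq_zero_or_pos s with rfl | hs1
        · simp only [Nat.sub_zero]
          rw [sg_i1j f i j hi1, he1, x0]
          exact x1.symm
        · exact sg_other f i j _ _ (by omega) (by omega) (by omega)
      exact hmin (i-1) j (by omega) hj (by omega) ⟨t, Or.inl ((vioH_congr hgf).mp hH)⟩
    · have x0 := hV.2 0 (Nat.zero_le _)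
      simp only [Nat.sub_zero] at x0
      rw [sg_i1j f i j hi1] at x0  -- 1 - c = t
      have x1 := hV.2 1 (le_trans (by omega) (hq t))
      rw [sg_other f i j _ _ (by omega) (by omega) (by omega)] at x1  -- c = t
      exact f2ne _ (x0.trans x1.symm)
  by_cases c3 : a = i ∧ b = j - 1
  · exfalso
    rw [c3.1, c3.2] at hg
    obtain ⟨t, hH | hV⟩ := hg
    · have x0 := hH.2 0 (Nat.zero_le _)
      simp only [Nat.sub_zero] at x0
      rw [sg_ij1 f i j] at x0  -- 1 - c = t
      have x1 := hH.2 1 (le_trans (by omega) (hp t))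
      rw [sg_other f i j _ _ (by omega) (by omega) (by omega)] at x1  -- c = t
      exact f2ne _ (x0.trans x1.symm)
    · have x0 := hV.2 0 (Nat.zero_le _)
      simp only [Nat.sub_zero] at x0
      rw [sg_ij1 f i j] at x0  -- 1 - c = t
      have x1 := hV.2 1 (le_trans (by omega) (hq t))
      have hx1 : j - 1 - 1 = j - 2 := by omega
      rw [hx1, sg_other f i j _ _ (by omega) (by omega) (by omega), he4] at x1  -- 1 - e = t
      have hgf : ∀ s ≤ q t, surgery3 f i j i (j - 1 - s) = f i (j - 1 - s) := by
        intro s hs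
        rcases Nat.eq_zero_or_pos s with rfl | hs1
        · simp only [Nat.sub_zero]
          rw [sg_ij1 f i j, he3, x0]
          exact x1.symm
        · exact sg_other f i j _ _ (by omega) (by omega) (by omega)
      exact hmin i (j-1) hi (by omega) (by omega) ⟨t, Or.inr ((vioV_congr hgf).mp hV)⟩
  by_cases c4 : a = i + 1 ∧ b = j - 1
  · rw [c4.1, c4.2] at hg ⊢
    obtain ⟨t, hH | hV⟩ := hg
    · exfalso
      have x1 := hH.2 1 (le_trans (by omega) (hp t))
      have hy1 : i + 1 - 1 = i := by omega
      rw [hy1, sg_ij1 f i j] at x1  -- 1 - c = t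
      have x2 := hH.2 2 (hp t)
      have hy2 : i + 1 - 2 = i - 1 := by omega
      rw [hy2, sg_other f i j _ _ (by omega) (by omega) (by omega)] at x2  -- c = t
      exact f2ne _ (x1.trans x2.symm)
    · have hgf : ∀ s ≤ q t, surgery3 f i j (i + 1) (j - 1 - s) = f (i + 1) (j - 1 - s) :=
        fun s _ => sg_other f i j _ _ (by omega) (by omega) (by omega)
      refine ⟨⟨t, Or.inr ((vioV_congr hgf).mp hV)⟩, ?_⟩
      simp only [ne_eq, Prod.mk.injEq]
      omega
  by_cases c5 : a = i - 1 ∧ b = j + 1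
  · rw [c5.1, c5.2] at hg ⊢
    obtain ⟨t, hH | hV⟩ := hg
    · have hgf : ∀ s ≤ p t, surgery3 f i j (i - 1 - s) (j + 1) = f (i - 1 - s) (j + 1) :=
        fun s _ => sg_other f i j _ _ (by omega) (by omega) (by omega)
      refine ⟨⟨t, Or.inl ((vioH_congr hgf).mp hH)⟩, ?_⟩
      simp only [ne_eq, Prod.mk.injEq]
      omega
    · exfalso
      have x1 := hV.2 1 (le_trans (by omega) (hq t))
      have hy1 : j + 1 - 1 = j := by omega
      rw [hy1, sg_i1j f i j hi1] at x1  -- 1 - c = t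
      have x2 := hV.2 2 (hq t)
      have hy2 : j + 1 - 2 = j - 1 := by omega
      rw [hy2, sg_other f i j _ _ (by omega) (by omega) (by omega)] at x2  -- c = t
      exact f2ne _ (x1.trans x2.symm)
  · have hrow : ∀ s : ℕ, surgery3 f i j (a - s) b = f (a - s) b :=
      fun s => sg_other f i j _ _ (by omega) (by omega) (by omega)
    have hcol : ∀ s : ℕ, surgery3 f i j a (b - s) = f a (b - s) :=
      fun s => sg_other f i j _ _ (by omega) (by omega) (by omega)
    refine ⟨(vioAny_congr (fun t s _ => hrow s) (fun t s _ => hcol s)).mp hg, ?_⟩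
    simp only [ne_eq, Prod.mk.injEq]
    omega

lemma step_exists (m n : ℕ) (p q : Fin 2 → ℕ) (hp : ∀ t, 2 ≤ p t) (hq : ∀ t, 2 ≤ q t)
    (f : ℕ → ℕ → Fin 2) (hnd : ¬ Dappled m n p q f) :
    ∃ g, step m n p q f g ∧ mu m n p q g < mu m n p q f := by
  obtain ⟨⟨i, j⟩, hi, hj, hij, hv⟩ := Nat.sInf_mem (wSet_nonempty hnd)
  have hmin : ∀ a b, a < m → b < n → a + b < i + j → ¬ vioAny p q f a b := by
    intro a b ha hb hab hva
    have h1 : sInf (wSet m n p q f) ≤ a + b := Nat.sInf_le ⟨(a, b), ha, hb, rfl, hva⟩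
    omega
  by_cases hflip : vioAny p q (upd f i j (1 - f i j)) i j
  · exact ⟨surgery3 f i j, ⟨i, j, hi, hj, hv, hmin, Or.inr ⟨hflip, rfl⟩⟩,
      mu_lt m n p q f _ i j hi hj hv hmin
        (surgery_H2 m n p q hp hq f i j hi hj hv hmin hflip)⟩
  · exact ⟨upd f i j (1 - f i j), ⟨i, j, hi, hj, hv, hmin, Or.inl ⟨hflip, rfl⟩⟩,
      mu_lt m n p q f _ i j hi hj hv hmin
        (fun a b ha hb hw hg => flip_H2 p q f i j hflip a b hw hg)⟩


/-- The local-surgery algorithm terminates in finitely many steps and outputs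
an `L`-dappled tiling; if the input is already `L`-dappled the output is the
input. -/
theorem stmt7 (m n : ℕ) (hm : 1 ≤ m) (hn : 1 ≤ n) (p q : Fin 2 → ℕ)
    (hp : ∀ t, 2 ≤ p t) (hq : ∀ t, 2 ≤ q t) (f : ℕ → ℕ → Fin 2) :
    ∃ g : ℕ → ℕ → Fin 2,
      Relation.ReflTransGen (step m n p q) f g ∧
      Dappled m n p q g ∧
      (Dappled m n p q f → g = f) := by
  have main : ∀ N f, mu m n p q f ≤ N →
      ∃ g, Relation.ReflTransGen (step m n p q) f g ∧ Dappled m n p q g := by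
    intro N
    induction N with
    | zero =>
      intro f h0
      by_cases hd : Dappled m n p q f
      · exact ⟨f, Relation.ReflTransGen.refl, hd⟩
      · obtain ⟨g, _, hlt⟩ := step_exists m n p q hp hq f hd
        omega
    | succ N ih =>
      intro f h
      by_cases hd : Dappled m n p q f
      · exact ⟨f, Relation.ReflTransGen.refl, hd⟩
      · obtain ⟨g, hstep, hlt⟩ := step_exists m n p q hp hq f hd
        obtain ⟨g', hpath, hdap⟩ := ih g (by omega)
        exact ⟨g', Relation.ReflTransGen.head hstep hpath, hdap⟩
  by_cases hd : Dappled m n p q f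
  · exact ⟨f, Relation.ReflTransGen.refl, hd, fun _ => rfl⟩
  · obtain ⟨g, hpath, hdap⟩ := main (mu m n p q f) f le_rfl
    exact ⟨g, hpath, hdap, fun h => absurd h hd⟩
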